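/- For every real h̄ > 0 and every x ∈ (0,1), the Lorentzian inversion kernel K(x) := x^{h̄−2} · ₂F₁(h̄,h̄;2h̄;x) satisfies the adjoint Casimir equation d/dx[ (1−x) · d/dx( x² · K(x) ) ] = h̄(h̄−1) · K(x). -/

import Mathlib

open Real

/-- Pochhammer symbol `(a)_n = a (a+1) ⋯ (a+n-1)`. -/
noncomputable def poch (a : ℝ) (n : ℕ) : ℝ := (ascPochhammer ℝ n).eval a

/-- Gauss hypergeometric series `₂F₁(a,b;c;x)`. -/
noncomputable def F21 (a b c x : ℝ) : ℝ :=
  ∑' n : ℕ, poch a n * poch b n / (poch c n * (n.factorial : ℝ)) * x ^ n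

/-- The Lorentzian inversion kernel `K(x) = x^{h̄−2} ₂F₁(h̄,h̄;2h̄;x)`. -/
noncomputable def invKernel (hb x : ℝ) : ℝ := x ^ (hb - 2) * F21 hb hb (2 * hb) x

namespace AC

noncomputable def c (hb : ℝ) (n : ℕ) : ℝ :=
  poch hb n * poch hb n / (poch (2 * hb) n * (n.factorial : ℝ))

lemma poch_pos {a : ℝ} (ha : 0 < a) (n : ℕ) : 0 < poch a n :=
  ascPochhammer_pos n a ha

lemma poch_succ (a : ℝ) (n : ℕ) : poch a (n + 1) = poch a n * (a + n) := by
  simp [poch, ascPochhammer_succ_eval]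

lemma c_pos {hb : ℝ} (hhb : 0 < hb) (n : ℕ) : 0 < c hb n := by
  have h1 := poch_pos hhb n
  have h2 := poch_pos (by linarith : (0:ℝ) < 2 * hb) n
  have h3 : (0:ℝ) < (n.factorial : ℝ) := by positivity
  exact div_pos (mul_pos h1 h1) (mul_pos h2 h3)

lemma c_rec {hb : ℝ} (hhb : 0 < hb) (n : ℕ) :
    (2 * hb + n) * (n + 1) * c hb (n + 1) = (hb + n) ^ 2 * c hb n := by
  have h1 := (poch_pos (by linarith : (0:ℝ) < 2 * hb) n).ne'
  have h3 : ((n.factorial : ℝ)) ≠ 0 := by positivity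
  have h4 : ((n:ℝ) + 1) ≠ 0 := by positivity
  have h5 : (2 * hb + (n:ℝ)) ≠ 0 := by positivity
  unfold c
  rw [poch_succ, poch_succ]
  have hfac : (((n+1).factorial : ℝ)) = (n.factorial : ℝ) * ((n:ℝ) + 1) := by
    push_cast [Nat.factorial_succ]; ring
  rw [hfac]
  field_simp

lemma c_decr {hb : ℝ} (hhb : 0 < hb) {n : ℕ} (hn : hb ^ 2 ≤ (n : ℝ)) :
    c hb (n + 1) ≤ c hb n := by
  have hrec := c_rec hhb n
  have hpos : (0:ℝ) < (2 * hb + n) * (n + 1) := by positivity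
  have hcn := c_pos hhb n
  have hineq : (hb + (n:ℝ)) ^ 2 ≤ (2 * hb + n) * (n + 1) := by nlinarith
  rw [← mul_le_mul_iff_right₀ hpos, hrec]
  nlinarith

/-- `c hb` is bounded. -/
lemma c_bounded {hb : ℝ} (hhb : 0 < hb) : ∃ C : ℝ, 0 ≤ C ∧ ∀ n, c hb n ≤ C := by
  set N := ⌈hb ^ 2⌉₊ with hN
  refine ⟨(Finset.range (N + 1)).sup' ⟨0, by simp⟩ (c hb), ?_, ?_⟩
  · exact le_trans (c_pos hhb 0).le (Finset.le_sup' _ (by simp))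
  · intro n
    induction n with
    | zero => exact Finset.le_sup' _ (by simp)
    | succ m ih =>
      rcases le_or_gt (m + 1) N with h | h
      · exact Finset.le_sup' _ (Finset.mem_range.2 (by omega))
      · have hm : hb ^ 2 ≤ (m : ℝ) := by
          have := Nat.ceil_le.mp (le_refl N)
          have hNm : (N : ℝ) ≤ (m : ℝ) := by exact_mod_cast Nat.lt_succ_iff.mp h
          calc hb ^ 2 ≤ (N : ℝ) := Nat.le_ceil _
          _ ≤ (m : ℝ) := hNm
        exact le_trans (c_decr hhb hm) ih

lemma summable_pow1 {k : ℕ} {r : ℝ} (hr0 : 0 < r) (hr1 : r < 1) :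
    Summable (fun n : ℕ => ((n : ℝ) + 1) ^ k * r ^ n) := by
  have h : Summable (fun n : ℕ => (n : ℝ) ^ k * r ^ n) :=
    summable_pow_mul_geometric_of_norm_lt_one k (by rwa [Real.norm_eq_abs, abs_of_pos hr0])
  have h2 := (summable_nat_add_iff 1).2 h
  have h3 := h2.mul_left r⁻¹
  refine h3.congr fun n => ?_
  push_cast
  field_simp
  ring

lemma summable_coeff {a : ℕ → ℝ} {k : ℕ} {C : ℝ}
    (ha : ∀ n, |a n| ≤ C * ((n : ℝ) + 1) ^ k) {x r : ℝ}
    (hx : |x| ≤ r) (hr0 : 0 < r) (hr1 : r < 1) :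
    Summable (fun n => a n * x ^ n) := by
  have hC : 0 ≤ C := by
    have := ha 0
    have h0 := abs_nonneg (a 0)
    simpa using le_trans h0 this
  refine Summable.of_norm (Summable.of_nonneg_of_le (fun n => norm_nonneg _) (fun n => ?_)
    (((summable_pow1 (k:=k) hr0 hr1)).mul_left C))
  rw [norm_mul, norm_pow, Real.norm_eq_abs, Real.norm_eq_abs]
  calc |a n| * |x| ^ n ≤ (C * ((n:ℝ)+1)^k) * r ^ n := by
        apply mul_le_mul (ha n) (pow_le_pow_left₀ (abs_nonneg x) hx n) (by positivity) (by positivity)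
    _ = C * (((n:ℝ)+1)^k * r ^ n) := by ring



lemma hasDerivAt_series {a : ℕ → ℝ} {k : ℕ} {C : ℝ}
    (ha : ∀ n, |a n| ≤ C * ((n : ℝ) + 1) ^ k) {x : ℝ} (hx : x ∈ Set.Ioo (0:ℝ) 1) :
    HasDerivAt (fun y => ∑' n, a n * y ^ n)
      (∑' n : ℕ, ((n : ℝ) + 1) * a (n + 1) * x ^ n) x := by
  obtain ⟨hx0, hx1⟩ := hx
  have hC : 0 ≤ C := by
    have := ha 0
    have h0 := abs_nonneg (a 0)
    simpa using le_trans h0 this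
  have hr0 : 0 < (1 + x) / 2 := by linarith
  have hr1 : (1 + x) / 2 < 1 := by linarith
  have hxr : x < (1 + x) / 2 := by linarith
  set r : ℝ := (1 + x) / 2 with hr
  have hu_sum : Summable (fun n : ℕ => C * ((n : ℝ) + 1) ^ (k + 1) * r ^ n / r) := by
    have h := ((summable_pow1 (k := k+1) hr0 hr1).mul_left C).div_const r
    exact h.congr fun n => by ring
  have hbound : ∀ (n : ℕ) (y : ℝ), y ∈ Set.Ioo (-r) r →
      ‖a n * ((n : ℝ) * y ^ (n - 1))‖ ≤ C * ((n : ℝ) + 1) ^ (k + 1) * r ^ n / r := by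
    intro n y hy
    have hyr : |y| ≤ r := by
      rw [abs_le]; exact ⟨(hy.1).le, (hy.2).le⟩
    have h1 : ‖a n * ((n:ℝ) * y ^ (n - 1))‖ = |a n| * ((n:ℝ) * |y| ^ (n-1)) := by
      simp [abs_mul, abs_pow, Nat.abs_cast]
    rw [h1]
    have h2 : |y| ^ (n - 1) ≤ r ^ (n - 1) := pow_le_pow_left₀ (abs_nonneg y) hyr _
    have h3 : r ^ (n - 1) ≤ r ^ n / r := by
      cases n with
      | zero =>
        have : (1:ℝ) ≤ 1 / r := by rw [le_div_iff₀ hr0]; linarith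
        simpa using this
      | succ m =>
        rw [Nat.add_sub_cancel, pow_succ, mul_div_assoc, div_self (ne_of_gt hr0), mul_one]
    have h4 : (n : ℝ) ≤ ((n:ℝ) + 1) := by linarith
    calc |a n| * ((n:ℝ) * |y| ^ (n-1))
        ≤ (C * ((n:ℝ)+1)^k) * (((n:ℝ)+1) * (r ^ n / r)) := by
          apply mul_le_mul (ha n) ?_ (by positivity) (by positivity)
          apply mul_le_mul h4 (le_trans h2 h3) (by positivity) (by positivity)
      _ = C * ((n : ℝ) + 1) ^ (k + 1) * r ^ n / r := by rw [pow_succ]; ring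
  have hxmem : x ∈ Set.Ioo (-r) r := ⟨by linarith, hxr⟩
  have hsum0 : Summable (fun n => a n * x ^ n) :=
    summable_coeff ha (le_of_lt (by rwa [abs_of_pos hx0])) hr0 hr1
  have hder : HasDerivAt (fun y => ∑' n, a n * y ^ n)
      (∑' n : ℕ, a n * ((n : ℝ) * x ^ (n - 1))) x :=
    hasDerivAt_tsum_of_isPreconnected
      (g := fun (n : ℕ) (y : ℝ) => a n * y ^ n)
      (g' := fun (n : ℕ) (y : ℝ) => a n * ((n : ℝ) * y ^ (n - 1)))
      hu_sum isOpen_Ioo isPreconnected_Ioo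
      (fun n y _ => (hasDerivAt_pow n y).const_mul (a n))
      hbound hxmem hsum0 hxmem
  have hsum_g' : Summable (fun n : ℕ => a n * ((n : ℝ) * x ^ (n - 1))) :=
    Summable.of_norm (Summable.of_nonneg_of_le (fun n => norm_nonneg _)
      (fun n => hbound n x hxmem) hu_sum)
  have htsum : (∑' n : ℕ, a n * ((n : ℝ) * x ^ (n - 1)))
      = ∑' n : ℕ, ((n : ℝ) + 1) * a (n + 1) * x ^ n := by
    rw [Summable.tsum_eq_zero_add hsum_g']
    simp only [Nat.cast_zero, zero_mul, mul_zero, zero_add]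
    apply tsum_congr
    intro n
    push_cast
    ring
  rwa [htsum] at hder


noncomputable def Fs (hb y : ℝ) : ℝ := ∑' n : ℕ, c hb n * y ^ n
noncomputable def F1 (hb y : ℝ) : ℝ := ∑' n : ℕ, ((n:ℝ)+1) * c hb (n+1) * y ^ n
noncomputable def F2 (hb y : ℝ) : ℝ := ∑' n : ℕ, ((n:ℝ)+1) * ((n:ℝ)+2) * c hb (n+2) * y ^ n

lemma bound0 {hb C : ℝ} (hhb : 0 < hb) (hC : ∀ n, c hb n ≤ C) (n : ℕ) :
    |c hb n| ≤ C * ((n:ℝ)+1) ^ 0 := by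
  simpa [abs_of_pos (c_pos hhb n)] using hC n

lemma bound1 {hb C : ℝ} (hhb : 0 < hb) (hC : ∀ n, c hb n ≤ C) (n : ℕ) :
    |((n:ℝ)+1) * c hb (n+1)| ≤ C * ((n:ℝ)+1) ^ 1 := by
  have h1 : (0:ℝ) < (n:ℝ)+1 := by positivity
  have h2 := c_pos hhb (n+1)
  rw [abs_of_pos (by positivity), pow_one]
  have := hC (n+1)
  nlinarith

lemma bound2 {hb C : ℝ} (hhb : 0 < hb) (hC0 : 0 ≤ C) (hC : ∀ n, c hb n ≤ C) (n : ℕ) :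
    |((n:ℝ)+1) * ((n:ℝ)+2) * c hb (n+2)| ≤ (2*C) * ((n:ℝ)+1) ^ 2 := by
  have h1 : (0:ℝ) < (n:ℝ)+1 := by positivity
  have h2 := c_pos hhb (n+2)
  rw [abs_of_pos (by positivity)]
  have h3 := hC (n+2)
  calc ((n:ℝ)+1) * ((n:ℝ)+2) * c hb (n+2) ≤ ((n:ℝ)+1) * ((n:ℝ)+2) * C :=
        mul_le_mul_of_nonneg_left h3 (by positivity)
    _ ≤ (2*C) * ((n:ℝ)+1) ^ 2 := by
        nlinarith [mul_nonneg (mul_nonneg hC0 h1.le) (Nat.cast_nonneg n : (0:ℝ) ≤ (n:ℝ))]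

lemma hasDerivAt_Fs {hb : ℝ} (hhb : 0 < hb) {x : ℝ} (hx : x ∈ Set.Ioo (0:ℝ) 1) :
    HasDerivAt (Fs hb) (F1 hb x) x := by
  obtain ⟨C, hC0, hCb⟩ := c_bounded hhb
  exact hasDerivAt_series (bound0 hhb hCb) hx

lemma hasDerivAt_F1 {hb : ℝ} (hhb : 0 < hb) {x : ℝ} (hx : x ∈ Set.Ioo (0:ℝ) 1) :
    HasDerivAt (F1 hb) (F2 hb x) x := by
  obtain ⟨C, hC0, hCb⟩ := c_bounded hhb
  have h := hasDerivAt_series (bound1 hhb hCb) hx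
  have heq : (∑' n : ℕ, ((n:ℝ)+1) * ((((n+1):ℕ):ℝ)+1) * c hb ((n+1)+1) * x ^ n) = F2 hb x := by
    rw [F2]
    apply tsum_congr
    intro n
    push_cast
    ring
  rw [← heq]
  exact h.congr_deriv (tsum_congr fun n => by push_cast; ring)

lemma ode {hb : ℝ} (hhb : 0 < hb) {y : ℝ} (hy : y ∈ Set.Ioo (0:ℝ) 1) :
    y * (1-y) * F2 hb y + (2*hb - (2*hb+1)*y) * F1 hb y - hb^2 * Fs hb y = 0 := by
  obtain ⟨hy0, hy1⟩ := hy
  obtain ⟨C, hC0, hCb⟩ := c_bounded hhb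
  have hay : |y| ≤ y := (abs_of_pos hy0).le
  have hG0 : HasSum (fun n : ℕ => c hb n * y ^ n) (Fs hb y) :=
    (summable_coeff (bound0 hhb hCb) hay hy0 hy1).hasSum
  have hG1 : HasSum (fun n : ℕ => ((n:ℝ)+1) * c hb (n+1) * y ^ n) (F1 hb y) :=
    (summable_coeff (bound1 hhb hCb) hay hy0 hy1).hasSum
  have hG2 : HasSum (fun n : ℕ => ((n:ℝ)+1) * ((n:ℝ)+2) * c hb (n+2) * y ^ n) (F2 hb y) :=
    (summable_coeff (bound2 hhb hC0 hCb) hay hy0 hy1).hasSum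
  -- shift lemmas
  have hxG1 : HasSum (fun n : ℕ => (n:ℝ) * c hb n * y ^ n) (y * F1 hb y) := by
    have h := hG1.mul_left y
    have h2 : (fun n : ℕ => (fun m : ℕ => (m:ℝ) * c hb m * y ^ m) (n+1))
        = fun n : ℕ => y * (((n:ℝ)+1) * c hb (n+1) * y ^ n) := by
      funext n; push_cast; ring
    rw [← h2] at h
    have h3 := (hasSum_nat_add_iff (f := fun m : ℕ => (m:ℝ) * c hb m * y ^ m) 1).mp h
    simpa using h3
  have hxG2 : HasSum (fun n : ℕ => (n:ℝ) * ((n:ℝ)+1) * c hb (n+1) * y ^ n) (y * F2 hb y) := by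
    have h := hG2.mul_left y
    have h2 : (fun n : ℕ => (fun m : ℕ => (m:ℝ) * ((m:ℝ)+1) * c hb (m+1) * y ^ m) (n+1))
        = fun n : ℕ => y * (((n:ℝ)+1) * ((n:ℝ)+2) * c hb (n+2) * y ^ n) := by
      funext n; push_cast; ring
    rw [← h2] at h
    have h3 := (hasSum_nat_add_iff (f := fun m : ℕ => (m:ℝ) * ((m:ℝ)+1) * c hb (m+1) * y ^ m) 1).mp h
    simpa using h3
  have hx2G2 : HasSum (fun n : ℕ => ((n:ℝ)-1) * (n:ℝ) * c hb n * y ^ n) (y * (y * F2 hb y)) := by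
    have h := hxG2.mul_left y
    have h2 : (fun n : ℕ => (fun m : ℕ => ((m:ℝ)-1) * (m:ℝ) * c hb m * y ^ m) (n+1))
        = fun n : ℕ => y * ((n:ℝ) * ((n:ℝ)+1) * c hb (n+1) * y ^ n) := by
      funext n; push_cast; ring
    rw [← h2] at h
    have h3 := (hasSum_nat_add_iff (f := fun m : ℕ => ((m:ℝ)-1) * (m:ℝ) * c hb m * y ^ m) 1).mp h
    simpa using h3
  have hfinal := ((hxG2.sub hx2G2).add ((hG1.mul_left (2*hb)).sub
      (hxG1.mul_left (2*hb+1)))).sub (hG0.mul_left (hb^2))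
  have hzero : (fun n : ℕ =>
      ((n:ℝ) * ((n:ℝ)+1) * c hb (n+1) * y ^ n - ((n:ℝ)-1) * (n:ℝ) * c hb n * y ^ n
        + ((2*hb) * (((n:ℝ)+1) * c hb (n+1) * y ^ n) - (2*hb+1) * ((n:ℝ) * c hb n * y ^ n))
        - hb^2 * (c hb n * y ^ n)))
      = fun _ : ℕ => (0:ℝ) := by
    funext n
    have hrec := c_rec hhb n
    linear_combination y ^ n * hrec
  rw [hzero] at hfinal
  have hS := hfinal.unique hasSum_zero
  linear_combination hS

lemma F21_eq (hb y : ℝ) : F21 hb hb (2*hb) y = Fs hb y := rfl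

lemma phi_eq {hb : ℝ} {w : ℝ} (hw : 0 < w) :
    w ^ 2 * invKernel hb w = w ^ hb * Fs hb w := by
  rw [invKernel, F21_eq]
  rw [show (w:ℝ)^(2:ℕ) = w ^ ((2:ℕ):ℝ) from (Real.rpow_natCast w 2).symm,
    ← mul_assoc, ← Real.rpow_add hw]
  norm_num

end AC

open AC in
/-- for h̄ > 0 and x ∈ (0,1), the inversion kernel satisfies the
adjoint Casimir equation `d/dx[(1−x)·d/dx(x²·K(x))] = h̄(h̄−1)·K(x)`. -/
theorem adjoint_casimir_eq (hb : ℝ) (hhb : 0 < hb) (x : ℝ) (hx : x ∈ Set.Ioo (0 : ℝ) 1) :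
    deriv (fun y => (1 - y) * deriv (fun w => w ^ 2 * invKernel hb w) y) x
      = hb * (hb - 1) * invKernel hb x := by
  obtain ⟨hx0, hx1⟩ := hx
  have hK : ∀ y ∈ Set.Ioo (0:ℝ) 1, HasDerivAt (fun w => w ^ 2 * invKernel hb w)
      (hb * y ^ (hb-1) * Fs hb y + y ^ hb * F1 hb y) y := by
    intro y hy
    have h1 : HasDerivAt (fun w : ℝ => w ^ hb) (hb * y ^ (hb-1)) y :=
      Real.hasDerivAt_rpow_const (Or.inl (ne_of_gt hy.1))
    have h3 := h1.mul (hasDerivAt_Fs hhb hy)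
    apply h3.congr_of_eventuallyEq
    filter_upwards [Ioo_mem_nhds hy.1 hy.2] with w hw
    exact phi_eq hw.1
  have hDeq : (fun y => (1 - y) * deriv (fun w => w ^ 2 * invKernel hb w) y)
      =ᶠ[nhds x] (fun y => (1 - y) * (hb * (y ^ (hb-1) * Fs hb y) + y ^ hb * F1 hb y)) := by
    filter_upwards [Ioo_mem_nhds hx0 hx1] with y hy
    rw [(hK y hy).deriv]
    ring
  rw [hDeq.deriv_eq]
  have hxm : x ∈ Set.Ioo (0:ℝ) 1 := ⟨hx0, hx1⟩
  have hrp1 : HasDerivAt (fun y : ℝ => y ^ (hb-1)) ((hb-1) * x ^ (hb-2)) x := by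
    have h := Real.hasDerivAt_rpow_const (x := x) (p := hb-1) (Or.inl (ne_of_gt hx0))
    rw [show hb - 1 - 1 = hb - 2 by ring] at h
    exact h
  have hA := hrp1.mul (hasDerivAt_Fs hhb hxm)
  have hrp2 : HasDerivAt (fun y : ℝ => y ^ hb) (hb * x ^ (hb-1)) x :=
    Real.hasDerivAt_rpow_const (Or.inl (ne_of_gt hx0))
  have hB := hrp2.mul (hasDerivAt_F1 hhb hxm)
  have hv := (hA.const_mul hb).add hB
  have hu : HasDerivAt (fun y : ℝ => 1 - y) (-1) x := by
    simpa using (hasDerivAt_id x).const_sub 1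
  have hpsi := hu.mul hv
  rw [show deriv (fun y => (1 - y) * (hb * (y ^ (hb - 1) * Fs hb y) + y ^ hb * F1 hb y)) x = -1 * (hb * (x ^ (hb - 1) * Fs hb x) + x ^ hb * F1 hb x) + (1 - x) * (hb * ((hb - 1) * x ^ (hb - 2) * Fs hb x + x ^ (hb - 1) * F1 hb x) + (hb * x ^ (hb - 1) * F1 hb x + x ^ hb * F2 hb x)) from hpsi.deriv]
  have hODE := ode hhb hxm
  have e1 : x ^ (hb-1) = x ^ (hb-2) * x := by
    rw [show hb - 1 = (hb-2) + 1 by ring, Real.rpow_add hx0, Real.rpow_one]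
  have e2 : x ^ hb = x ^ (hb-2) * x * x := by
    conv_lhs => rw [show hb = (hb-2) + 1 + 1 by ring]
    rw [Real.rpow_add hx0, Real.rpow_add hx0, Real.rpow_one]
  have hinv : invKernel hb x = x ^ (hb-2) * Fs hb x := by rw [invKernel, F21_eq]
  rw [hinv, e1, e2]
  linear_combination (x ^ (hb-2) * x) * hODE
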